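/- For a unit vector |ψ⟩ ∈ ℂ^d, M_α(ψ) = 0 for α ≥ 2 if and only if the probability distribution P_a(ψ) = (1/d)|⟨ψ|D_a|ψ⟩|² is uniform (equal to 1/d) on exactly d values of a and zero elsewhere, i.e., |⟨ψ|D_a|ψ⟩| ∈ {0, 1} for all a. -/

import Mathlib

open scoped BigOperators Kronecker
open Matrix

noncomputable section

/-- The primitive `d`-th root of unity `ω = e^{2πi/d}`. -/
def omega (d : ℕ) : ℂ := Complex.exp (2 * Real.pi * Complex.I / d)

/-- A fixed square root of `ω`: `τ = e^{πi/d}`, so `τ ^ 2 = ω`. -/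
def tau (d : ℕ) : ℂ := Complex.exp (Real.pi * Complex.I / d)

/-- Weyl–Heisenberg displacement operator `D_a = ω^{a₁a₂/2} X^{a₁} Z^{a₂}` on `ℂ^d`,
where `X |k⟩ = |k+1⟩` is the shift and `Z |k⟩ = ω^k |k⟩` is the clock (arithmetic mod `d`). -/
def Disp (d : ℕ) (a : ℤ × ℤ) : Matrix (ZMod d) (ZMod d) ℂ := fun j k =>
  tau d ^ (a.1 * a.2) * omega d ^ (a.2 * (k.val : ℤ)) * (if j = k + (a.1 : ZMod d) then 1 else 0)

/-- Rank-one projector `|v⟩⟨v|`. -/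
def proj {n : Type*} (v : n → ℂ) : Matrix n n ℂ := Matrix.vecMulVec v (star v)

/-- Stabilizer entropy of order `α` of a state `ρ` on `ℂ^d`. -/
def stabEntropy (d : ℕ) [NeZero d] (α : ℝ) (ρ : Matrix (ZMod d) (ZMod d) ℂ) : ℝ :=
  (1 / (1 - α)) * Real.log (∑ a : ZMod d × ZMod d,
      ((1 / d) * norm (Disp d ((a.1.val : ℤ), (a.2.val : ℤ)) * ρ).trace ^ 2) ^ α)
    - Real.log d

/-- ⟨ψ| D_a |ψ⟩ -/
def cval (d : ℕ) [NeZero d] (ψ : ZMod d → ℂ) (a : ZMod d × ZMod d) : ℂ :=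
  star ψ ⬝ᵥ ((Disp d ((a.1.val : ℤ), (a.2.val : ℤ))).mulVec ψ)

lemma tau_mul_conj (d : ℕ) : tau d * (starRingEnd ℂ) (tau d) = 1 := by
  rw [tau, ← Complex.exp_conj, ← Complex.exp_add]
  have : (starRingEnd ℂ) (↑Real.pi * Complex.I / ↑d) = -(↑Real.pi * Complex.I / ↑d) := by
    simp [div_eq_mul_inv, Complex.conj_I, Complex.conj_natCast]
  rw [this, add_neg_cancel, Complex.exp_zero]

lemma omega_mul_conj (d : ℕ) : omega d * (starRingEnd ℂ) (omega d) = 1 := by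
  rw [omega, ← Complex.exp_conj, ← Complex.exp_add]
  have : (starRingEnd ℂ) (2 * ↑Real.pi * Complex.I / ↑d) = -(2 * ↑Real.pi * Complex.I / ↑d) := by
    simp only [div_eq_mul_inv, _root_.map_mul, map_inv₀, Complex.conj_I, Complex.conj_natCast,
      map_ofNat, Complex.conj_ofReal]
    ring
  rw [this, add_neg_cancel, Complex.exp_zero]

lemma abs_tau (d : ℕ) : norm (tau d) = 1 := by
  have h := tau_mul_conj d
  rw [Complex.mul_conj] at h
  have h2 : norm (tau d) ^ 2 = 1 := by
    rw [Complex.sq_norm]; exact_mod_cast congrArg Complex.re h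
  nlinarith [norm_nonneg (tau d)]

lemma omega_ne_zero (d : ℕ) : omega d ≠ 0 := Complex.exp_ne_zero _

lemma tau_ne_zero (d : ℕ) : tau d ≠ 0 := Complex.exp_ne_zero _

lemma conj_omega (d : ℕ) : (starRingEnd ℂ) (omega d) = (omega d)⁻¹ :=
  eq_inv_of_mul_eq_one_left (by rw [mul_comm]; exact omega_mul_conj d)

lemma abs_omega (d : ℕ) : norm (omega d) = 1 := by
  have h := omega_mul_conj d
  rw [Complex.mul_conj] at h
  have := Complex.sq_norm (omega d)
  have h2 : norm (omega d) ^ 2 = 1 := by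
    rw [this]; exact_mod_cast congrArg Complex.re h
  nlinarith [norm_nonneg (omega d)]

/-- sum of powers of a primitive root -/
lemma omega_sum (d : ℕ) [NeZero d] (k k' : ZMod d) :
    ∑ a : ZMod d, omega d ^ ((a.val : ℤ) * ((k.val : ℤ) - (k'.val : ℤ))) =
      if k = k' then (d : ℂ) else 0 := by
  have hd : d ≠ 0 := NeZero.ne d
  set m : ℤ := (k.val : ℤ) - (k'.val : ℤ) with hm
  set z : ℂ := omega d ^ m with hz
  have hterm : ∀ a : ZMod d, omega d ^ ((a.val : ℤ) * m) = z ^ (a.val : ℕ) := by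
    intro a
    rw [hz, ← zpow_natCast (omega d ^ m) a.val, ← _root_.zpow_mul, mul_comm]
  have hsum : ∑ a : ZMod d, omega d ^ ((a.val : ℤ) * m) = ∑ i ∈ Finset.range d, z ^ i := by
    simp_rw [hterm]
    refine Finset.sum_nbij' (fun a => a.val) (fun i => (i : ZMod d)) ?_ ?_ ?_ ?_ ?_
    · intro a _; exact Finset.mem_range.mpr (ZMod.val_lt a)
    · intro i _; exact Finset.mem_univ _
    · intro a _; simp [ZMod.natCast_val, ZMod.cast_id]
    · intro i hi; exact ZMod.val_cast_of_lt (Finset.mem_range.mp hi)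
    · intro a _; rfl
  rw [hsum]
  have homega : IsPrimitiveRoot (omega d) d := by
    unfold omega; exact Complex.isPrimitiveRoot_exp d hd
  by_cases hkk : k = k'
  · subst hkk
    have : m = 0 := by omega
    simp [hz, this]
  · have hz1 : z ≠ 1 := by
      intro h
      have hdvd := (homega.zpow_eq_one_iff_dvd m).mp h
      have hm0 : m = 0 := by
        refine Int.eq_zero_of_dvd_of_natAbs_lt_natAbs hdvd ?_
        have h1 := ZMod.val_lt k
        have h2 := ZMod.val_lt k'
        simp only [Int.natAbs_natCast]
        omega
      apply hkk
      have hvv : k.val = k'.val := by omega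
      exact ZMod.val_injective d hvv
    have hzd : z ^ d = 1 := by
      rw [hz, ← zpow_natCast (omega d ^ m) d, ← _root_.zpow_mul, mul_comm, _root_.zpow_mul, zpow_natCast,
        homega.pow_eq_one, _root_.one_zpow]
    rw [geom_sum_eq hz1, hzd]
    simp [hkk]

/-- shift reindexing -/
lemma sum_shift {M : Type*} [AddCommMonoid M] (d : ℕ) [NeZero d] (f : ZMod d → M) (c : ZMod d) :
    ∑ a : ZMod d, f (a + c) = ∑ j : ZMod d, f j :=
  Fintype.sum_equiv (Equiv.addRight c) _ _ (fun _ => rfl)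

lemma cval_eq (d : ℕ) [NeZero d] (ψ : ZMod d → ℂ) (a : ZMod d × ZMod d) :
    cval d ψ a = tau d ^ ((a.1.val : ℤ) * (a.2.val : ℤ)) *
      ∑ k : ZMod d, omega d ^ ((a.2.val : ℤ) * (k.val : ℤ)) * (starRingEnd ℂ) (ψ (k + a.1)) * ψ k := by
  have hc : ((a.1.val : ℕ) : ZMod d) = a.1 := by simp [ZMod.natCast_val, ZMod.cast_id]
  simp only [cval, Disp, dotProduct, Matrix.mulVec, Pi.star_apply, Finset.mul_sum]
  rw [Finset.sum_comm]
  refine Finset.sum_congr rfl fun k _ => ?_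
  simp only [mul_ite, ite_mul, mul_one, mul_zero, zero_mul, Pi.star_apply]
  rw [Finset.sum_ite_eq' Finset.univ (k + (((a.1.val : ℤ) : ZMod d)))]
  simp only [Finset.mem_univ, if_true]
  push_cast [hc]
  rw [Complex.star_def]
  ring

lemma trace_mul_proj {n : Type*} [Fintype n] (M : Matrix n n ℂ) (v : n → ℂ) :
    (M * proj v).trace = star v ⬝ᵥ M.mulVec v := by
  simp only [Matrix.trace, Matrix.diag_apply, Matrix.mul_apply, proj, Matrix.vecMulVec_apply,
    dotProduct, Matrix.mulVec, Pi.star_apply, Finset.mul_sum]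
  refine Finset.sum_congr rfl fun j _ => Finset.sum_congr rfl fun k _ => ?_
  ring

/-- normalization of ψ as a complex sum -/
lemma psi_norm (d : ℕ) [NeZero d] (ψ : ZMod d → ℂ) (hψ : ∑ k, norm (ψ k) ^ 2 = 1) :
    ∑ k : ZMod d, (starRingEnd ℂ) (ψ k) * ψ k = 1 := by
  have : ∑ k : ZMod d, (starRingEnd ℂ) (ψ k) * ψ k
      = ((∑ k, norm (ψ k) ^ 2 : ℝ) : ℂ) := by
    push_cast
    refine Finset.sum_congr rfl fun k _ => ?_
    rw [mul_comm, Complex.mul_conj]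
    norm_cast
    rw [Complex.sq_norm]
  rw [this, hψ]; norm_num

lemma cval_zero (d : ℕ) [NeZero d] (ψ : ZMod d → ℂ) (hψ : ∑ k, norm (ψ k) ^ 2 = 1) :
    cval d ψ (0, 0) = 1 := by
  rw [cval_eq]
  simp only [ZMod.val_zero, Nat.cast_zero, mul_zero, zero_mul, zpow_zero, one_mul, add_zero]
  exact psi_norm d ψ hψ

lemma sum_cval_mul_conj (d : ℕ) [NeZero d] (ψ : ZMod d → ℂ)
    (hψ : ∑ k, norm (ψ k) ^ 2 = 1) :
    ∑ a : ZMod d × ZMod d, cval d ψ a * (starRingEnd ℂ) (cval d ψ a) = d := by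
  have hne := omega_ne_zero d
  have htau : ∀ n : ℤ, tau d ^ n * (starRingEnd ℂ) (tau d ^ n) = 1 := fun n => by
    rw [map_zpow₀, ← mul_zpow, tau_mul_conj, _root_.one_zpow]
  have key : ∀ a : ZMod d × ZMod d, cval d ψ a * (starRingEnd ℂ) (cval d ψ a)
      = ∑ k : ZMod d, ∑ k' : ZMod d,
          ((starRingEnd ℂ) (ψ (k + a.1)) * ψ k * ψ (k' + a.1) * (starRingEnd ℂ) (ψ k')) *
            omega d ^ ((a.2.val : ℤ) * ((k.val : ℤ) - (k'.val : ℤ))) := by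
    intro a
    rw [cval_eq, _root_.map_mul, mul_mul_mul_comm, htau, one_mul, map_sum, Finset.sum_mul_sum]
    refine Finset.sum_congr rfl fun k _ => Finset.sum_congr rfl fun k' _ => ?_
    have hexp : (a.2.val : ℤ) * (k.val : ℤ) + -((a.2.val : ℤ) * (k'.val : ℤ))
        = (a.2.val : ℤ) * ((k.val : ℤ) - (k'.val : ℤ)) := by ring
    calc omega d ^ ((a.2.val : ℤ) * (k.val : ℤ)) * (starRingEnd ℂ) (ψ (k + a.1)) * ψ k *
          (starRingEnd ℂ) (omega d ^ ((a.2.val : ℤ) * (k'.val : ℤ)) *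
            (starRingEnd ℂ) (ψ (k' + a.1)) * ψ k')
        = ((starRingEnd ℂ) (ψ (k + a.1)) * ψ k * ψ (k' + a.1) * (starRingEnd ℂ) (ψ k')) *
            (omega d ^ ((a.2.val : ℤ) * (k.val : ℤ)) *
              omega d ^ (-((a.2.val : ℤ) * (k'.val : ℤ)))) := by
          rw [_root_.map_mul, _root_.map_mul, map_zpow₀, conj_omega, _root_.inv_zpow, ← _root_.zpow_neg,
            Complex.conj_conj]
          ring
      _ = _ := by rw [← zpow_add₀ hne, hexp]
  calc ∑ a : ZMod d × ZMod d, cval d ψ a * (starRingEnd ℂ) (cval d ψ a)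
      = ∑ a1 : ZMod d, ∑ a2 : ZMod d, ∑ k : ZMod d, ∑ k' : ZMod d,
          ((starRingEnd ℂ) (ψ (k + a1)) * ψ k * ψ (k' + a1) * (starRingEnd ℂ) (ψ k')) *
            omega d ^ ((a2.val : ℤ) * ((k.val : ℤ) - (k'.val : ℤ))) := by
        rw [Fintype.sum_prod_type]
        exact Finset.sum_congr rfl fun a1 _ => Finset.sum_congr rfl fun a2 _ => key (a1, a2)
    _ = ∑ a1 : ZMod d, ∑ k : ZMod d, ∑ k' : ZMod d,
          ((starRingEnd ℂ) (ψ (k + a1)) * ψ k * ψ (k' + a1) * (starRingEnd ℂ) (ψ k')) *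
            ∑ a2 : ZMod d, omega d ^ ((a2.val : ℤ) * ((k.val : ℤ) - (k'.val : ℤ))) := by
        refine Finset.sum_congr rfl fun a1 _ => ?_
        rw [Finset.sum_comm]
        refine Finset.sum_congr rfl fun k _ => ?_
        rw [Finset.sum_comm]
        refine Finset.sum_congr rfl fun k' _ => ?_
        rw [Finset.mul_sum]
    _ = ∑ a1 : ZMod d, ∑ k : ZMod d,
          ((starRingEnd ℂ) (ψ (k + a1)) * ψ k * ψ (k + a1) * (starRingEnd ℂ) (ψ k)) * d := by
        refine Finset.sum_congr rfl fun a1 _ => Finset.sum_congr rfl fun k _ => ?_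
        simp_rw [omega_sum, mul_ite, mul_zero]
        rw [Finset.sum_ite_eq Finset.univ k]
        simp
    _ = ∑ k : ZMod d, (∑ a1 : ZMod d, (starRingEnd ℂ) (ψ (k + a1)) * ψ (k + a1)) *
          ((starRingEnd ℂ) (ψ k) * ψ k) * d := by
        rw [Finset.sum_comm]
        refine Finset.sum_congr rfl fun k _ => ?_
        rw [Finset.sum_mul, Finset.sum_mul]
        exact Finset.sum_congr rfl fun a1 _ => by ring
    _ = d := by
        have hshift : ∀ k : ZMod d,
            ∑ a1 : ZMod d, (starRingEnd ℂ) (ψ (k + a1)) * ψ (k + a1)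
              = ∑ j : ZMod d, (starRingEnd ℂ) (ψ j) * ψ j :=
          fun k => Fintype.sum_equiv (Equiv.addLeft k) _ _ (fun _ => rfl)
        simp_rw [hshift, psi_norm d ψ hψ, one_mul]
        rw [← Finset.sum_mul, psi_norm d ψ hψ, one_mul]

lemma sum_sq_cval (d : ℕ) [NeZero d] (ψ : ZMod d → ℂ) (hψ : ∑ k, norm (ψ k) ^ 2 = 1) :
    ∑ a : ZMod d × ZMod d, (norm (cval d ψ a) : ℝ) ^ 2 = d := by
  have h := sum_cval_mul_conj d ψ hψ
  have h2 : ((∑ a : ZMod d × ZMod d, norm (cval d ψ a) ^ 2 : ℝ) : ℂ) = ((d : ℝ) : ℂ) := by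
    push_cast
    rw [← h]
    refine Finset.sum_congr rfl fun a _ => ?_
    rw [Complex.mul_conj]
    norm_cast
    rw [Complex.sq_norm]
  exact_mod_cast h2

lemma abs_cval_le_one (d : ℕ) [NeZero d] (ψ : ZMod d → ℂ) (hψ : ∑ k, norm (ψ k) ^ 2 = 1)
    (a : ZMod d × ZMod d) : norm (cval d ψ a) ^ 2 ≤ 1 := by
  rw [cval_eq, norm_mul, norm_zpow, abs_tau, _root_.one_zpow, one_mul]
  have h1 : norm (∑ k : ZMod d,
        omega d ^ ((a.2.val : ℤ) * (k.val : ℤ)) * (starRingEnd ℂ) (ψ (k + a.1)) * ψ k)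
      ≤ ∑ k : ZMod d, norm (ψ (k + a.1)) * norm (ψ k) := by
    refine le_trans (norm_sum_le _ _) (Finset.sum_le_sum fun k _ => ?_)
    rw [norm_mul, norm_mul, norm_zpow, abs_omega, _root_.one_zpow, one_mul,
      Complex.norm_conj]
  have h3 : ∑ k : ZMod d, norm (ψ (k + a.1)) ^ 2 = 1 := by
    rw [← hψ]
    exact Fintype.sum_equiv (Equiv.addRight a.1) _ _ (fun _ => rfl)
  calc norm (∑ k : ZMod d,
        omega d ^ ((a.2.val : ℤ) * (k.val : ℤ)) * (starRingEnd ℂ) (ψ (k + a.1)) * ψ k) ^ 2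
      ≤ (∑ k : ZMod d, norm (ψ (k + a.1)) * norm (ψ k)) ^ 2 := by
        exact pow_le_pow_left₀ (norm_nonneg _) h1 2
    _ ≤ (∑ k : ZMod d, norm (ψ (k + a.1)) ^ 2) * (∑ k : ZMod d, norm (ψ k) ^ 2) :=
        Finset.sum_mul_sq_le_sq_mul_sq _ _ _
    _ = 1 := by rw [h3, hψ, one_mul]

lemma rpow_split {x α : ℝ} (hx : 0 < x) : x ^ α = x ^ (α - 1) * x := by
  conv_lhs => rw [show α = (α - 1) + 1 by ring]
  rw [Real.rpow_add hx, Real.rpow_one]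

lemma main_aux (d : ℕ) (hd : 0 < (d : ℝ)) (α : ℝ) (hα : 2 ≤ α) {ι : Type*} [Fintype ι]
    (P : ι → ℝ) (hP0 : ∀ a, 0 ≤ P a) (hPle : ∀ a, P a ≤ 1 / (d : ℝ))
    (hPsum : ∑ a, P a = 1) (hSpos : 0 < ∑ a, P a ^ α) :
    (1 / (1 - α) * Real.log (∑ a, P a ^ α) - Real.log d = 0) ↔
      (∀ a, P a = 0 ∨ P a = 1 / (d : ℝ)) := by
  have h1α : 1 - α < 0 := by linarith
  have hα0 : α ≠ 0 := by linarith
  have hα1 : (0 : ℝ) < α - 1 := by linarith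
  have hdinv : (0 : ℝ) < 1 / (d : ℝ) := by positivity
  have hpow : ((1 : ℝ) / d) ^ (α - 1) = (d : ℝ) ^ (1 - α) := by
    rw [one_div, Real.inv_rpow hd.le, ← Real.rpow_neg hd.le, neg_sub]
  have hle : ∀ a, P a ^ α ≤ (1 / (d : ℝ)) ^ (α - 1) * P a := by
    intro a
    rcases eq_or_lt_of_le (hP0 a) with h | h
    · rw [← h, Real.zero_rpow hα0, mul_zero]
    · rw [rpow_split h]
      exact mul_le_mul_of_nonneg_right (Real.rpow_le_rpow (hP0 a) (hPle a) hα1.le) (hP0 a)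
  have hsumg : ∑ a : ι, (1 / (d : ℝ)) ^ (α - 1) * P a = (d : ℝ) ^ (1 - α) := by
    rw [← Finset.mul_sum, hPsum, mul_one, hpow]
  have hiff2 : (∑ a : ι, P a ^ α = (d : ℝ) ^ (1 - α)) ↔
      ∀ a, P a ^ α = (1 / (d : ℝ)) ^ (α - 1) * P a := by
    rw [← hsumg, Finset.sum_eq_sum_iff_of_le (fun a _ => hle a)]
    exact ⟨fun h a => h a (Finset.mem_univ a), fun h a _ => h a⟩
  have hiff3 : (∀ a, P a ^ α = (1 / (d : ℝ)) ^ (α - 1) * P a) ↔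
      (∀ a, P a = 0 ∨ P a = 1 / (d : ℝ)) := by
    refine forall_congr' fun a => ⟨fun h => ?_, fun h => ?_⟩
    · rcases eq_or_lt_of_le (hP0 a) with h0 | h0
      · exact Or.inl h0.symm
      · right
        have hsplit : P a ^ (α - 1) * P a = (1 / (d : ℝ)) ^ (α - 1) * P a := by
          rw [← rpow_split h0, h]
        have hcan : P a ^ (α - 1) = (1 / (d : ℝ)) ^ (α - 1) :=
          mul_right_cancel₀ (ne_of_gt h0) hsplit
        by_contra hne
        cases' lt_or_gt_of_ne hne with hlt hgt
        · exact absurd hcan (ne_of_lt (Real.rpow_lt_rpow (hP0 a) hlt hα1))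
        · exact absurd hcan (ne_of_gt (Real.rpow_lt_rpow hdinv.le hgt hα1))
    · rcases h with h | h
      · rw [h, Real.zero_rpow hα0, mul_zero]
      · rw [h, ← rpow_split hdinv]
  have hiff1 : (1 / (1 - α) * Real.log (∑ a, P a ^ α) - Real.log d = 0) ↔
      ∑ a : ι, P a ^ α = (d : ℝ) ^ (1 - α) := by
    rw [sub_eq_zero]
    constructor
    · intro h
      have hlog : Real.log (∑ a, P a ^ α) = Real.log ((d : ℝ) ^ (1 - α)) := by
        rw [Real.log_rpow hd]
        field_simp at h
        rw [div_eq_iff (ne_of_lt h1α)] at h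
        linarith [h]
      exact Real.log_injOn_pos (Set.mem_Ioi.mpr hSpos)
        (Set.mem_Ioi.mpr (Real.rpow_pos_of_pos hd _)) hlog
    · intro h
      rw [h, Real.log_rpow hd]
      field_simp
      exact mul_div_cancel_left₀ _ (ne_of_lt h1α)
  exact hiff1.trans (hiff2.trans hiff3)

lemma card_aux {ι : Type*} [Fintype ι] (d : ℕ) (hd : 0 < (d : ℝ)) (P : ι → ℝ)
    [DecidablePred fun a => P a ≠ 0]
    (hdich : ∀ a, P a = 0 ∨ P a = 1 / (d : ℝ)) (hPsum : ∑ a, P a = 1) :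
    (Finset.univ.filter fun a => P a ≠ 0).card = d := by
  have h1 : ∑ a ∈ Finset.univ.filter (fun a => P a ≠ 0), P a = 1 := by
    rw [Finset.sum_filter_ne_zero]; exact hPsum
  have h2 : ∑ a ∈ Finset.univ.filter (fun a => P a ≠ 0), P a
      = ((Finset.univ.filter fun a => P a ≠ 0).card : ℝ) * (1 / (d : ℝ)) := by
    rw [Finset.sum_congr rfl (fun a ha => ?_), Finset.sum_const, nsmul_eq_mul]
    rcases hdich a with h | h
    · exact absurd h (Finset.mem_filter.mp ha).2
    · exact h
  rw [h2] at h1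
  have h3 : ((Finset.univ.filter fun a => P a ≠ 0).card : ℝ) = d := by
    field_simp at h1
    exact_mod_cast h1
  exact_mod_cast h3

/-- For a unit vector `ψ ∈ ℂ^d` and `α ≥ 2`, `M_α(ψ) = 0` iff the distribution
`P_a(ψ) = (1/d)|⟨ψ|D_a|ψ⟩|²` is uniform (`= 1/d`) on exactly `d` values of `a` and zero
elsewhere, i.e. `|⟨ψ|D_a|ψ⟩| ∈ {0, 1}` for all `a`. -/
theorem stabEntropy_eq_zero_iff (d : ℕ) [NeZero d] (α : ℝ) (hα : 2 ≤ α)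
    (ψ : ZMod d → ℂ) (hψ : ∑ k, norm (ψ k) ^ 2 = 1) :
    stabEntropy d α (proj ψ) = 0 ↔
      ((Finset.univ.filter (fun a : ZMod d × ZMod d =>
          (1 / d : ℝ) * norm (star ψ ⬝ᵥ
            ((Disp d ((a.1.val : ℤ), (a.2.val : ℤ))).mulVec ψ)) ^ 2 ≠ 0)).card = d ∧
       (∀ a : ZMod d × ZMod d,
          (1 / d : ℝ) * norm (star ψ ⬝ᵥ
            ((Disp d ((a.1.val : ℤ), (a.2.val : ℤ))).mulVec ψ)) ^ 2 = 0 ∨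
          (1 / d : ℝ) * norm (star ψ ⬝ᵥ
            ((Disp d ((a.1.val : ℤ), (a.2.val : ℤ))).mulVec ψ)) ^ 2 = 1 / d) ∧
       (∀ a : ZMod d × ZMod d,
          norm (star ψ ⬝ᵥ
            ((Disp d ((a.1.val : ℤ), (a.2.val : ℤ))).mulVec ψ)) = 0 ∨
          norm (star ψ ⬝ᵥ
            ((Disp d ((a.1.val : ℤ), (a.2.val : ℤ))).mulVec ψ)) = 1)) := by
  have hd : (0 : ℝ) < d := by
    have := NeZero.pos d
    exact_mod_cast this
  set P : ZMod d × ZMod d → ℝ := fun a =>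
    (1 / d : ℝ) * norm (star ψ ⬝ᵥ
      ((Disp d ((a.1.val : ℤ), (a.2.val : ℤ))).mulVec ψ)) ^ 2 with hP
  have hPc : ∀ a, P a = (1 / d : ℝ) * norm (cval d ψ a) ^ 2 := fun a => rfl
  have hP0 : ∀ a, 0 ≤ P a := fun a => by rw [hPc]; positivity
  have hPle : ∀ a, P a ≤ 1 / (d : ℝ) := by
    intro a
    rw [hPc]
    calc (1 / d : ℝ) * norm (cval d ψ a) ^ 2 ≤ (1 / d : ℝ) * 1 :=
          mul_le_mul_of_nonneg_left (abs_cval_le_one d ψ hψ a) (by positivity)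
      _ = 1 / (d : ℝ) := mul_one _
  have hPsum : ∑ a, P a = 1 := by
    simp_rw [hPc]
    rw [← Finset.mul_sum, sum_sq_cval d ψ hψ, one_div, inv_mul_cancel₀ (ne_of_gt hd)]
  have hPzero : P (0, 0) = 1 / (d : ℝ) := by
    rw [hPc, cval_zero d ψ hψ, norm_one, one_pow, mul_one]
  have hSpos : 0 < ∑ a, P a ^ α := by
    refine Finset.sum_pos' (fun a _ => Real.rpow_nonneg (hP0 a) α) ⟨(0, 0), Finset.mem_univ _, ?_⟩
    exact Real.rpow_pos_of_pos (by rw [hPzero]; positivity) α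
  have hE : stabEntropy d α (proj ψ) = 1 / (1 - α) * Real.log (∑ a, P a ^ α) - Real.log d := by
    unfold stabEntropy
    have hsum : (∑ a : ZMod d × ZMod d,
        ((1 / d : ℝ) * norm (Disp d ((a.1.val : ℤ), (a.2.val : ℤ)) * proj ψ).trace ^ 2) ^ α)
        = ∑ a, P a ^ α := by
      refine Finset.sum_congr rfl fun a _ => ?_
      rw [trace_mul_proj]
    rw [hsum]
  have hmain : stabEntropy d α (proj ψ) = 0 ↔ ∀ a, P a = 0 ∨ P a = 1 / (d : ℝ) := by
    rw [hE]
    exact main_aux d hd α hα P hP0 hPle hPsum hSpos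
  have habs : ∀ a, (P a = 0 ∨ P a = 1 / (d : ℝ)) →
      (norm (cval d ψ a) = 0 ∨ norm (cval d ψ a) = 1) := by
    intro a h
    have hd' : (1 / d : ℝ) ≠ 0 := by positivity
    rcases h with h | h
    · left
      rw [hPc] at h
      rcases mul_eq_zero.mp h with h | h
      · exact absurd h hd'
      · exact pow_eq_zero_iff two_ne_zero |>.mp h
    · right
      rw [hPc] at h
      have hsq : norm (cval d ψ a) ^ 2 = 1 := by
        have := h.trans (mul_one (1 / (d:ℝ))).symm
        exact mul_left_cancel₀ hd' this
      have hnn := norm_nonneg (cval d ψ a)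
      nlinarith [hsq, hnn]
  constructor
  · intro h
    have hdich := hmain.mp h
    refine ⟨?_, hdich, fun a => habs a (hdich a)⟩
    exact card_aux d hd P hdich hPsum
  · rintro ⟨-, hdich, -⟩
    exact hmain.mpr hdich
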